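/- If every base-B subword of n is prime and n has at least 2p+1 base-B digits where p is a prime not dividing B, then n has a subword of length at least 2 equal to p. -/
import Mathlib


/-- The base-`B` subword of `n` from digit position `i` to `j`. -/
def subword (B n i j : ℕ) : ℕ :=
  ∑ k ∈ Finset.Icc i j, (Nat.digits B n).getD k 0 * B ^ (k - i)

theorem subword_eq_p (B p n : ℕ) (hB : 2 ≤ B) (hp : p.Prime) (hpB : ¬ p ∣ B)
    (hlen : 2 * p + 1 ≤ (Nat.digits B n).length)
    (hprime : ∀ i j : ℕ, i ≤ j → j < (Nat.digits B n).length →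
      (subword B n i j).Prime) :
    ∃ i j : ℕ, i < j ∧ j < (Nat.digits B n).length ∧ subword B n i j = p := by
  haveI : Fact p.Prime := ⟨hp⟩
  set d := Nat.digits B n with hd
  set x : ℕ → ℕ := fun k => d.getD k 0 with hx
  set P : ℕ → ℕ := fun t => ∑ k ∈ Finset.range t, x k * B ^ k with hP
  -- pigeonhole: among P 0, ..., P (2p+1) (that's 2p+2 values), some residue mod p
  -- appears at least 3 times
  have hcard : (Finset.univ : Finset (ZMod p)).card * 2 < (Finset.range (2 * p + 2)).card := by
    simp [ZMod.card]
    omega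
  obtain ⟨y, -, hy⟩ := Finset.exists_lt_card_fiber_of_mul_lt_card_of_maps_to
    (f := fun t => ((P t : ZMod p))) (fun a _ => Finset.mem_univ _) hcard
  set fib := {t ∈ Finset.range (2 * p + 2) | ((P t : ZMod p)) = y} with hfib
  have hne : fib.Nonempty := Finset.card_pos.mp (by omega)
  set a := fib.min' hne with ha
  set c := fib.max' hne with hc
  have hamem := fib.min'_mem hne
  have hcmem := fib.max'_mem hne
  have hsub : fib ⊆ Finset.Icc a c := fun t ht =>
    Finset.mem_Icc.mpr ⟨fib.min'_le t ht, fib.le_max' t ht⟩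
  have hcard2 : fib.card ≤ c + 1 - a := by
    simpa [Nat.card_Icc] using Finset.card_le_card hsub
  have hac : a + 2 ≤ c := by omega
  have hclt : c < 2 * p + 2 := by
    have := Finset.mem_filter.mp hcmem
    have := Finset.mem_range.mp this.1
    omega
  have hPeq : ((P a : ZMod p)) = ((P c : ZMod p)) := by
    have h1 := (Finset.mem_filter.mp hamem).2
    have h2 := (Finset.mem_filter.mp hcmem).2
    rw [h1, h2]
  -- p divides P c - P a
  have hmod : P a ≡ P c [MOD p] := (ZMod.natCast_eq_natCast_iff _ _ _).mp hPeq
  have hle : P a ≤ P c := Finset.sum_le_sum_of_subset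
    (Finset.range_subset_range.mpr (by omega))
  have hdvd : p ∣ P c - P a := (Nat.modEq_iff_dvd' hle).mp hmod
  -- P c - P a = sum over Ico a c
  have hsplit : P a + ∑ k ∈ Finset.Ico a c, x k * B ^ k = P c := by
    rw [hP]
    simp only [Finset.range_eq_Ico]
    exact Finset.sum_Ico_consecutive _ (Nat.zero_le a) (by omega)
  have hdvdS : p ∣ ∑ k ∈ Finset.Ico a c, x k * B ^ k := by
    have : P c - P a = ∑ k ∈ Finset.Ico a c, x k * B ^ k := by omega
    rwa [this] at hdvd
  -- relate to subword
  obtain ⟨c', hc'⟩ : ∃ c', c = c' + 1 := ⟨c - 1, by omega⟩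
  rw [hc'] at hdvdS hac hclt
  have hsw : ∑ k ∈ Finset.Ico a (c' + 1), x k * B ^ k = B ^ a * subword B n a c' := by
    rw [Finset.Ico_add_one_right_eq_Icc, subword, Finset.mul_sum]
    refine Finset.sum_congr rfl fun k hk => ?_
    have hak : a ≤ k := (Finset.mem_Icc.mp hk).1
    have : B ^ k = B ^ a * B ^ (k - a) := by
      rw [← pow_add]
      congr 1
      omega
    rw [this]
    ring
  rw [hsw] at hdvdS
  have hpW : p ∣ subword B n a c' := by
    have hcop : Nat.Coprime p (B ^ a) :=
      Nat.Coprime.pow_right _ (hp.coprime_iff_not_dvd.mpr hpB)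
    exact hcop.dvd_of_dvd_mul_left hdvdS
  have hWprime : (subword B n a c').Prime := hprime a c' (by omega) (by omega)
  have : p = subword B n a c' := by
    rcases (Nat.Prime.eq_one_or_self_of_dvd hWprime p hpW) with h | h
    · exact absurd h hp.ne_one
    · exact h
  exact ⟨a, c', by omega, by omega, this.symm⟩
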